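/- Let Φ : ℝ → Mat_{N×m}(ℂ) and U : ℝ → Mat_{N×N}(ℂ) be differentiable families of matrices such that for all t: Φ(t)†·Φ(t) = 1_m (orthonormal frames), U(t) is unitary, and U(t)·conj(Φ(t)) = Φ(t). Then for every t, 2·tr(Φ(t)†·Φ'(t)) = -tr( Φ(t)† · U(t) · (U†)'(t) · Φ(t) ), where (U†)'(t) denotes the derivative of t ↦ U(t)†. -/

import Mathlib

open Matrix

/-- Entrywise derivative of a matrix product. -/
lemma hasDerivAt_matrix_mul {n p q : ℕ}
    (A A' : ℝ → Matrix (Fin n) (Fin p) ℂ) (B B' : ℝ → Matrix (Fin p) (Fin q) ℂ) (t : ℝ)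
    (hA : ∀ i j, HasDerivAt (fun s => A s i j) (A' t i j) t)
    (hB : ∀ i j, HasDerivAt (fun s => B s i j) (B' t i j) t)
    (i : Fin n) (j : Fin q) :
    HasDerivAt (fun s => (A s * B s) i j) ((A' t * B t + A t * B' t) i j) t := by
  have : HasDerivAt (fun s => ∑ k, A s i k * B s k j)
      (∑ k, (A' t i k * B t k j + A t i k * B' t k j)) t :=
    HasDerivAt.fun_sum fun k _ => (hA i k).mul (hB k j)
  simpa [Matrix.mul_apply, Matrix.add_apply, Finset.sum_add_distrib] using this

theorem pt_berry_connection_identity (N m : ℕ)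
    (Φ Φ' : ℝ → Matrix (Fin N) (Fin m) ℂ)
    (U Ud' : ℝ → Matrix (Fin N) (Fin N) ℂ)
    (hΦ' : ∀ (t : ℝ) (i : Fin N) (j : Fin m),
      HasDerivAt (fun s => Φ s i j) (Φ' t i j) t)
    (hUd' : ∀ (t : ℝ) (i j : Fin N),
      HasDerivAt (fun s => (U s)ᴴ i j) (Ud' t i j) t)
    (hortho : ∀ t, (Φ t)ᴴ * Φ t = 1)
    (hunitary : ∀ t, U t ∈ Matrix.unitaryGroup (Fin N) ℂ)
    (hgauge : ∀ t, U t * (Φ t).map (starRingEnd ℂ) = Φ t) :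
    ∀ t : ℝ,
      2 * ((Φ t)ᴴ * Φ' t).trace = -(((Φ t)ᴴ * U t * Ud' t * Φ t).trace) := by
  intro t
  -- entrywise derivatives of auxiliary families
  have hΦd : ∀ (i : Fin m) (j : Fin N),
      HasDerivAt (fun s => (Φ s)ᴴ i j) ((Φ' t)ᴴ i j) t := by
    intro i j
    simpa [conjTranspose_apply] using (hΦ' t j i).star
  have hU' : ∀ (i j : Fin N),
      HasDerivAt (fun s => U s i j) ((Ud' t)ᴴ i j) t := by
    intro i j
    have := (hUd' t j i).star
    simpa [conjTranspose_apply] using this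
  have hΦc : ∀ (i : Fin N) (j : Fin m),
      HasDerivAt (fun s => (Φ s).map (starRingEnd ℂ) i j)
        ((Φ' t).map (starRingEnd ℂ) i j) t := by
    intro i j
    simpa [Matrix.map_apply] using (hΦ' t i j).star
  -- (a) Φ'ᴴ Φ + Φᴴ Φ' = 0
  have ha : (Φ' t)ᴴ * Φ t + (Φ t)ᴴ * Φ' t = 0 := by
    ext i j
    have h1 := hasDerivAt_matrix_mul (fun s => (Φ s)ᴴ) (fun s => (Φ' s)ᴴ) Φ Φ' t
      hΦd (hΦ' t) i j
    have h2 : HasDerivAt (fun s => ((Φ s)ᴴ * Φ s) i j) 0 t := by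
      have : (fun s => ((Φ s)ᴴ * Φ s) i j) = fun _ => (1 : Matrix (Fin m) (Fin m) ℂ) i j := by
        funext s; rw [hortho s]
      rw [this]; exact hasDerivAt_const t _
    have := h2.unique h1
    simpa using this.symm
  -- (b) Ud'ᴴ Uᴴ + U Ud' = 0
  have hUU : ∀ s, U s * (U s)ᴴ = 1 := by
    intro s
    simpa [star_eq_conjTranspose] using (Matrix.mem_unitaryGroup_iff.mp (hunitary s))
  have hb : (Ud' t)ᴴ * (U t)ᴴ + U t * Ud' t = 0 := by
    ext i j
    have h1 := hasDerivAt_matrix_mul U (fun s => (Ud' s)ᴴ) (fun s => (U s)ᴴ) Ud' t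
      hU' (hUd' t) i j
    have h2 : HasDerivAt (fun s => (U s * (U s)ᴴ) i j) 0 t := by
      have : (fun s => (U s * (U s)ᴴ) i j) = fun _ => (1 : Matrix (Fin N) (Fin N) ℂ) i j := by
        funext s; rw [hUU s]
      rw [this]; exact hasDerivAt_const t _
    have := h2.unique h1
    simpa using this.symm
  -- (c) Ud'ᴴ conjΦ + U conjΦ' = Φ'
  have hc : (Ud' t)ᴴ * (Φ t).map (starRingEnd ℂ) + U t * (Φ' t).map (starRingEnd ℂ) = Φ' t := by
    ext i j
    have h1 := hasDerivAt_matrix_mul U (fun s => (Ud' s)ᴴ)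
      (fun s => (Φ s).map (starRingEnd ℂ)) (fun s => (Φ' s).map (starRingEnd ℂ)) t
      hU' hΦc i j
    have h2 : HasDerivAt (fun s => (U s * (Φ s).map (starRingEnd ℂ)) i j) (Φ' t i j) t := by
      have : (fun s => (U s * (Φ s).map (starRingEnd ℂ)) i j) = fun s => Φ s i j := by
        funext s; rw [hgauge s]
      rw [this]; exact hΦ' t i j
    exact (h2.unique h1).symm
  -- notation
  set P := Φ t with hP
  set P' := Φ' t
  set V := U t
  set W := Ud' t
  have hVV : Vᴴ * V = 1 := by
    simpa [star_eq_conjTranspose] using (Matrix.mem_unitaryGroup_iff'.mp (hunitary t))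
  have hV1 : V * Vᴴ = 1 := hUU t
  -- conj P = Vᴴ P
  have hconj : P.map (starRingEnd ℂ) = Vᴴ * P := by
    have h := congrArg (fun M => Vᴴ * M) (hgauge t)
    have h' : Vᴴ * (V * P.map (starRingEnd ℂ)) = Vᴴ * P := h
    rw [← Matrix.mul_assoc, hVV, Matrix.one_mul] at h'
    exact h'
  -- V' = Wᴴ = -(V W V)
  have hVd : Wᴴ = -(V * W * V) := by
    have : (Wᴴ * Vᴴ + V * W) * V = 0 := by rw [hb, Matrix.zero_mul]
    have h2 : Wᴴ * (Vᴴ * V) + V * W * V = 0 := by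
      rw [← Matrix.mul_assoc]
      simpa [Matrix.add_mul] using this
    rw [hVV, Matrix.mul_one] at h2
    exact eq_neg_of_add_eq_zero_left h2
  -- (Pᴴ V = Pᵀ)
  have hmapT : (P.map (starRingEnd ℂ))ᴴ = Pᵀ := by
    ext i j; simp [conjTranspose_apply, Matrix.map_apply]
  have hPT : Pᴴ * V = Pᵀ := by
    have h := congrArg Matrix.conjTranspose hconj
    rw [hmapT, conjTranspose_mul, conjTranspose_conjTranspose] at h
    exact h.symm
  have hTmap : Pᵀ * (P'.map (starRingEnd ℂ)) = (Pᴴ * P').map (starRingEnd ℂ) := by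
    rw [Matrix.map_mul]
    congr 1
    ext i j; simp [conjTranspose_apply, Matrix.map_apply, Matrix.transpose_apply]
  have htracemap : ∀ (A : Matrix (Fin m) (Fin m) ℂ),
      (A.map (starRingEnd ℂ)).trace = star A.trace := by
    intro A; simp [Matrix.trace, Matrix.diag, map_sum, Matrix.map_apply]
  -- P' = -(V W P) + V conj(P')
  have hP'eq : P' = -(V * W * P) + V * (P'.map (starRingEnd ℂ)) := by
    have hmul : V * W * V * (Vᴴ * P) = V * W * P := by
      rw [← Matrix.mul_assoc, Matrix.mul_assoc (V * W) V Vᴴ, hV1, Matrix.mul_one]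
    have h := hc
    rw [hconj, hVd, Matrix.neg_mul, hmul] at h
    exact h.symm
  -- trace identity from (c)
  have hT : (Pᴴ * P').trace
      = -((Pᴴ * (V * W * P)).trace) + star ((Pᴴ * P').trace) := by
    conv_lhs => rw [hP'eq]
    rw [Matrix.mul_add, Matrix.mul_neg, trace_add, trace_neg,
      ← Matrix.mul_assoc Pᴴ V (P'.map (starRingEnd ℂ)), hPT, hTmap, htracemap]
  -- antisymmetry from (a)
  have hstar : star ((Pᴴ * P').trace) = -((Pᴴ * P').trace) := by
    have h1 : P'ᴴ * P = -(Pᴴ * P') := eq_neg_of_add_eq_zero_left ha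
    calc star ((Pᴴ * P').trace) = ((Pᴴ * P')ᴴ).trace := (trace_conjTranspose _).symm
      _ = (P'ᴴ * P).trace := by rw [conjTranspose_mul, conjTranspose_conjTranspose]
      _ = -((Pᴴ * P').trace) := by rw [h1, trace_neg]
  have hassoc : Pᴴ * V * W * P = Pᴴ * (V * W * P) := by simp [Matrix.mul_assoc]
  rw [hassoc]
  linear_combination hT + hstar
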